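/- For the DSII solution U(z,t) = i(z² − 2i(t−C))/(|z|² + |z² + 2i(t−C)|²) at the singular time t = C, writing z = re^{iφ}, one has U(re^{iφ}, C) → i e^{2iφ} as r → 0⁺ for each fixed φ; consequently U has no limit at z = 0 (different directional limits), i.e., the singularity is an indeterminacy. -/

import Mathlib

open Complex Filter

/-- U(z,t) = i(z² − 2i(t−C))/(|z|² + |z² + 2i(t−C)|²) -/
noncomputable def UDSC (C : ℝ) (z : ℂ) (t : ℝ) : ℂ :=
  Complex.I * (z^2 - 2 * Complex.I * ((t - C : ℝ) : ℂ))
    / (((‖z‖^2 + ‖z^2 + 2 * Complex.I * ((t - C : ℝ) : ℂ)‖^2 : ℝ)) : ℂ)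

lemma UDSC_ray (C : ℝ) (φ : ℝ) {r : ℝ} (hr : 0 < r) :
    UDSC C ((r : ℂ) * Complex.exp (Complex.I * (φ : ℂ))) C
      = Complex.I * Complex.exp (2 * Complex.I * (φ : ℂ)) / ((1 + r^2 : ℝ) : ℂ) := by
  have habs : ‖(r : ℂ) * Complex.exp (Complex.I * (φ : ℂ))‖ = r := by
    simp [map_mul, Complex.norm_exp, abs_of_pos hr]
  have hsq : ((r : ℂ) * Complex.exp (Complex.I * (φ : ℂ)))^2
      = (r : ℂ)^2 * Complex.exp (2 * Complex.I * (φ : ℂ)) := by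
    rw [mul_pow, ← Complex.exp_nat_mul]
    ring_nf
  have hr2 : (0:ℝ) < r^2 := by positivity
  have hden : ((r^2 + (r^2)^2 : ℝ) : ℂ) = (r:ℂ)^2 * ((1 + r^2 : ℝ) : ℂ) := by
    push_cast; ring
  simp only [UDSC, sub_self, Complex.ofReal_zero, mul_zero, sub_zero, add_zero, hsq,
    habs, norm_mul, norm_pow, Complex.norm_real, Real.norm_eq_abs, Complex.norm_exp]
  have hre : (2 * Complex.I * (φ:ℂ)).re = 0 := by simp
  rw [hre, Real.exp_zero, mul_one, abs_of_pos hr, hden]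
  have hrne : (r:ℂ)^2 ≠ 0 := pow_ne_zero 2 (by exact_mod_cast hr.ne')
  rw [show Complex.I * ((r:ℂ)^2 * Complex.exp (2 * Complex.I * (φ:ℂ)))
      = (r:ℂ)^2 * (Complex.I * Complex.exp (2 * Complex.I * (φ:ℂ))) by ring,
    mul_div_mul_left _ _ hrne]

theorem dsii_singularity_is_indeterminacy (C : ℝ) :
    (∀ φ : ℝ, Tendsto (fun r : ℝ => UDSC C ((r : ℂ) * Complex.exp (Complex.I * (φ : ℂ))) C)
      (nhdsWithin 0 (Set.Ioi 0))
      (nhds (Complex.I * Complex.exp (2 * Complex.I * (φ : ℂ))))) ∧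
    ¬ ∃ L : ℂ, Tendsto (fun z : ℂ => UDSC C z C) (nhdsWithin 0 {(0 : ℂ)}ᶜ) (nhds L) := by
  have key : ∀ φ : ℝ, Tendsto (fun r : ℝ => UDSC C ((r : ℂ) * Complex.exp (Complex.I * (φ : ℂ))) C)
      (nhdsWithin 0 (Set.Ioi 0))
      (nhds (Complex.I * Complex.exp (2 * Complex.I * (φ : ℂ)))) := by
    intro φ
    have hc : Continuous fun r : ℝ => ((1 + r^2 : ℝ) : ℂ) := by continuity
    have h1 : Tendsto (fun r : ℝ => Complex.I * Complex.exp (2 * Complex.I * (φ:ℂ)) / ((1 + r^2 : ℝ) : ℂ))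
        (nhdsWithin 0 (Set.Ioi 0)) (nhds (Complex.I * Complex.exp (2 * Complex.I * (φ:ℂ)))) := by
      have h2 : Tendsto (fun r : ℝ => ((1 + r^2 : ℝ) : ℂ)) (nhdsWithin 0 (Set.Ioi 0))
          (nhds ((1 + (0:ℝ)^2 : ℝ) : ℂ)) := (hc.tendsto 0).mono_left nhdsWithin_le_nhds
      have h3 := (tendsto_const_nhds (x := Complex.I * Complex.exp (2 * Complex.I * (φ:ℂ)))
        (f := nhdsWithin (0:ℝ) (Set.Ioi 0))).div h2 (by norm_num)
      simpa [Pi.div_def] using h3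
    refine h1.congr' ?_
    filter_upwards [self_mem_nhdsWithin] with r hr
    exact (UDSC_ray C φ hr).symm
  refine ⟨key, ?_⟩
  rintro ⟨L, hL⟩
  have hray : ∀ φ : ℝ, Tendsto (fun r : ℝ => (r : ℂ) * Complex.exp (Complex.I * (φ:ℂ)))
      (nhdsWithin 0 (Set.Ioi 0)) (nhdsWithin 0 {(0:ℂ)}ᶜ) := by
    intro φ
    apply tendsto_nhdsWithin_of_tendsto_nhds_of_eventually_within
    · have : Continuous fun r : ℝ => (r : ℂ) * Complex.exp (Complex.I * (φ:ℂ)) := by continuity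
      simpa using (this.tendsto 0).mono_left nhdsWithin_le_nhds
    · filter_upwards [self_mem_nhdsWithin] with r hr
      simp only [Set.mem_compl_iff, Set.mem_singleton_iff]
      exact mul_ne_zero (by exact_mod_cast (ne_of_gt hr)) (Complex.exp_ne_zero _)
  have hlim : ∀ φ : ℝ, L = Complex.I * Complex.exp (2 * Complex.I * (φ:ℂ)) := by
    intro φ
    exact tendsto_nhds_unique (hL.comp (hray φ)) (key φ)
  have h0 := hlim 0
  have h2 := hlim (Real.pi / 2)
  rw [show (2 * Complex.I * ((Real.pi / 2 : ℝ):ℂ)) = (Real.pi : ℂ) * Complex.I by push_cast; ring,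
    Complex.exp_pi_mul_I] at h2
  simp at h0
  rw [h0] at h2
  simp at h2
  exact Complex.I_ne_zero (by linear_combination h2/2)
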